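/- Let n ≥ 1, let U ⊆ ℝⁿ be open, let f : U → ℝ be a positive C³ function and let u : U → ℝ be a C¹ function. Then at every point of U, div((u²/f)·(Hess f)·∇f) = (u²/f)·⟨∇(Δf), ∇f⟩ + (2u/f)·(∇u)ᵀ·(Hess f)·(∇f) − (u²/f²)·(∇f)ᵀ·(Hess f)·(∇f) + (u²/f)·‖Hess f‖_F². -/

import Mathlib

open scoped BigOperators

/-- Partial derivative `∂ᵢ v` of a scalar function on `ℝⁿ = Fin n → ℝ`. -/
noncomputable def pd {n : ℕ} (i : Fin n) (v : (Fin n → ℝ) → ℝ) (x : Fin n → ℝ) : ℝ :=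
  fderiv ℝ v x (Pi.single i 1)

/-- Gradient `∇v`. -/
noncomputable def grad {n : ℕ} (v : (Fin n → ℝ) → ℝ) (x : Fin n → ℝ) : Fin n → ℝ :=
  fun i => pd i v x

/-- Hessian matrix `(∂ᵢ∂ⱼ v)ᵢⱼ`. -/
noncomputable def hess {n : ℕ} (v : (Fin n → ℝ) → ℝ) (x : Fin n → ℝ) :
    Matrix (Fin n) (Fin n) ℝ :=
  fun i j => pd i (fun y => pd j v y) x

/-- Laplacian `Δv = tr (Hess v)`. -/
noncomputable def lap {n : ℕ} (v : (Fin n → ℝ) → ℝ) (x : Fin n → ℝ) : ℝ :=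
  ∑ i, hess v x i i

/-- Divergence of a vector field. -/
noncomputable def divg {n : ℕ} (X : (Fin n → ℝ) → (Fin n → ℝ)) (x : Fin n → ℝ) : ℝ :=
  ∑ i, pd i (fun y => X y i) x

/-- Euclidean inner product. -/
def dotp {n : ℕ} (a b : Fin n → ℝ) : ℝ := ∑ i, a i * b i

/-- Frobenius inner product of matrices. -/
def frobInner {n : ℕ} (A B : Matrix (Fin n) (Fin n) ℝ) : ℝ := ∑ i, ∑ j, A i j * B i j

/-- Squared Frobenius norm of a matrix. -/
def frobSq {n : ℕ} (A : Matrix (Fin n) (Fin n) ℝ) : ℝ := ∑ i, ∑ j, (A i j) ^ 2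

section helpers
variable {n : ℕ} {x : Fin n → ℝ}

variable {n : ℕ} {x : Fin n → ℝ}

lemma contDiffAt_pd {m : ℕ} {v : (Fin n → ℝ) → ℝ} (j : Fin n)
    (hv : ContDiffAt ℝ (m+1) v x) : ContDiffAt ℝ m (fun y => pd j v y) x := by
  have h1 : ContDiffAt ℝ m (fderiv ℝ v) x := hv.fderiv_right (by norm_cast)
  exact h1.clm_apply contDiffAt_const

lemma diffAt_pd {m : ℕ} {v : (Fin n → ℝ) → ℝ} (j : Fin n)
    (hv : ContDiffAt ℝ (m+2) v x) : DifferentiableAt ℝ (fun y => pd j v y) x := by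
  have := contDiffAt_pd (m := m+1) j (by exact_mod_cast hv)
  exact this.differentiableAt (by simp)

lemma pd_congr_nhds {v w : (Fin n → ℝ) → ℝ} (i : Fin n) (h : v =ᶠ[nhds x] w) :
    pd i v x = pd i w x := by
  unfold pd; rw [Filter.EventuallyEq.fderiv_eq h]

lemma pd_add {a b : (Fin n → ℝ) → ℝ} (i : Fin n)
    (ha : DifferentiableAt ℝ a x) (hb : DifferentiableAt ℝ b x) :
    pd i (fun y => a y + b y) x = pd i a x + pd i b x := by
  unfold pd; rw [fderiv_fun_add ha hb]; rfl

lemma pd_sum {ι : Type*} (s : Finset ι) {F : ι → (Fin n → ℝ) → ℝ} (i : Fin n)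
    (hF : ∀ j ∈ s, DifferentiableAt ℝ (F j) x) :
    pd i (fun y => ∑ j ∈ s, F j y) x = ∑ j ∈ s, pd i (F j) x := by
  unfold pd
  rw [fderiv_fun_sum hF]
  simp

lemma pd_mul {a b : (Fin n → ℝ) → ℝ} (i : Fin n)
    (ha : DifferentiableAt ℝ a x) (hb : DifferentiableAt ℝ b x) :
    pd i (fun y => a y * b y) x = pd i a x * b x + a x * pd i b x := by
  unfold pd; rw [fderiv_fun_mul ha hb]; simp; ring

lemma pd_inv {a : (Fin n → ℝ) → ℝ} (i : Fin n)
    (ha : DifferentiableAt ℝ a x) (h0 : a x ≠ 0) :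
    pd i (fun y => (a y)⁻¹) x = -pd i a x / (a x) ^ 2 := by
  unfold pd
  have : (fun y => (a y)⁻¹) = Inv.inv ∘ a := rfl
  rw [this, fderiv_comp x (differentiableAt_inv h0) ha, fderiv_inv]
  simp
  ring

lemma pd_comm {v : (Fin n → ℝ) → ℝ} (hv : ContDiffAt ℝ 2 v x) (i j : Fin n) :
    pd i (fun y => pd j v y) x = pd j (fun y => pd i v y) x := by
  have hs : IsSymmSndFDerivAt ℝ v x := hv.isSymmSndFDerivAt (by norm_num)
  have hd : DifferentiableAt ℝ (fderiv ℝ v) x :=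
    (hv.fderiv_right (m := 1) (by norm_num)).differentiableAt (by norm_num)
  have key : ∀ a b : Fin n, pd a (fun y => pd b v y) x
      = fderiv ℝ (fderiv ℝ v) x (Pi.single a 1) (Pi.single b 1) := by
    intro a b
    show fderiv ℝ (fun y => (fderiv ℝ v y) (Pi.single b 1)) x (Pi.single a 1) = _
    rw [fderiv_clm_apply hd (differentiableAt_const _)]
    simp
  rw [key, key, hs]

end helpers


theorem stmt9 {n : ℕ} (hn : 1 ≤ n) {U : Set (Fin n → ℝ)} (hU : IsOpen U)
    (f u : (Fin n → ℝ) → ℝ)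
    (hf : ContDiffOn ℝ 3 f U) (hfpos : ∀ x ∈ U, 0 < f x)
    (hu : ContDiffOn ℝ 1 u U) :
    ∀ x ∈ U,
      divg (fun y => ((u y) ^ 2 / f y) • ((hess f y).mulVec (grad f y))) x =
        (u x ^ 2 / f x) * dotp (grad (fun y => lap f y) x) (grad f x)
        + (2 * u x / f x) * dotp (grad u x) ((hess f x).mulVec (grad f x))
        - (u x ^ 2 / (f x) ^ 2) * dotp (grad f x) ((hess f x).mulVec (grad f x))
        + (u x ^ 2 / f x) * frobSq (hess f x) := by
  intro x hx
  -- basic smoothness facts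
  have hf3 : ∀ y ∈ U, ContDiffAt ℝ 3 f y := fun y hy => hf.contDiffAt (hU.mem_nhds hy)
  have hf3x : ContDiffAt ℝ 3 f x := hf3 x hx
  have hfd : DifferentiableAt ℝ f x := hf3x.differentiableAt (by norm_num)
  have hud : DifferentiableAt ℝ u x :=
    (hu.contDiffAt (hU.mem_nhds hx)).differentiableAt (by norm_num)
  have hfne : f x ≠ 0 := ne_of_gt (hfpos x hx)
  have dg : ∀ j : Fin n, DifferentiableAt ℝ (fun y => pd j f y) x := fun j =>
    diffAt_pd (m := 1) j (by exact_mod_cast hf3x)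
  have cg2 : ∀ j : Fin n, ContDiffAt ℝ 2 (fun y => pd j f y) x := fun j =>
    contDiffAt_pd (m := 2) j (by exact_mod_cast hf3x)
  have dh : ∀ i j : Fin n, DifferentiableAt ℝ (fun y => pd i (fun z => pd j f z) y) x :=
    fun i j => by
      have h2 : ContDiffAt ℝ 2 (fun z => pd j f z) x :=
        contDiffAt_pd (m := 2) j (by exact_mod_cast hf3x)
      exact diffAt_pd (m := 0) i (by exact_mod_cast h2)
  have dq : DifferentiableAt ℝ (fun y => u y ^ 2 / f y) x := by
    simp only [div_eq_mul_inv]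
    exact (DifferentiableAt.pow hud 2).mul (hfd.inv hfne)
  have dS : ∀ i : Fin n, DifferentiableAt ℝ
      (fun y => ∑ j, pd i (fun z => pd j f z) y * pd j f y) x := fun i =>
    DifferentiableAt.fun_sum fun j _ => (dh i j).fun_mul (dg j)
  -- derivative of the coefficient u^2/f
  have pdq : ∀ i : Fin n, pd i (fun y => u y ^ 2 / f y) x
      = 2 * u x * pd i u x / f x - u x ^ 2 * pd i f x / f x ^ 2 := by
    intro i
    have e1 : (fun y => u y ^ 2 / f y) = fun y => (u y * u y) * (f y)⁻¹ := by
      funext y; rw [div_eq_mul_inv]; ring_nf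
    rw [e1, pd_mul i (hud.fun_mul hud) (hfd.fun_inv hfne), pd_mul i hud hud,
      pd_inv i hfd hfne]
    field_simp
    ring
  -- derivative of the i-th sum
  have pdS : ∀ i : Fin n, pd i (fun y => ∑ j, pd i (fun z => pd j f z) y * pd j f y) x
      = ∑ j, (pd i (fun y => pd i (fun z => pd j f z) y) x * pd j f x
          + pd i (fun z => pd j f z) x * pd i (fun z => pd j f z) x) := by
    intro i
    rw [pd_sum Finset.univ i (fun j _ => (dh i j).fun_mul (dg j))]
    exact Finset.sum_congr rfl fun j _ => pd_mul i (dh i j) (dg j)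
  -- third derivative commutation
  have Tsum : ∀ j : Fin n, (∑ i, pd i (fun y => pd i (fun z => pd j f z) y) x)
      = pd j (fun y => ∑ i, pd i (fun z => pd i f z) y) x := by
    intro j
    rw [pd_sum Finset.univ j (fun i _ => dh i i)]
    refine Finset.sum_congr rfl fun i _ => ?_
    have step1 : pd i (fun y => pd i (fun z => pd j f z) y) x
        = pd i (fun y => pd j (fun z => pd i f z) y) x := by
      apply pd_congr_nhds
      filter_upwards [hU.mem_nhds hx] with y hy
      exact pd_comm ((hf3 y hy).of_le (by norm_num)) i j
    rw [step1]
    exact pd_comm (cg2 i) i j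
  have expand : ∀ i : Fin n, pd i (fun y => (u y ^ 2 / f y)
        * ∑ j, pd i (fun z => pd j f z) y * pd j f y) x
      = (2 * u x * pd i u x / f x - u x ^ 2 * pd i f x / f x ^ 2)
          * (∑ j, pd i (fun z => pd j f z) x * pd j f x)
        + (u x ^ 2 / f x) * ∑ j, (pd i (fun y => pd i (fun z => pd j f z) y) x * pd j f x
            + pd i (fun z => pd j f z) x * pd i (fun z => pd j f z) x) := by
    intro i
    rw [pd_mul i dq (dS i), pdq i, pdS i]
  -- unfold everything
  simp only [divg, dotp, grad, hess, frobSq, lap, Matrix.mulVec, dotProduct,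
    Pi.smul_apply, smul_eq_mul]
  simp only [expand, ← Tsum]
  -- pure algebra with finite sums
  trans (∑ i, ∑ j,
      (2 * u x * pd i u x / f x * (pd i (fun y => pd j f y) x * pd j f x)
        - u x ^ 2 * pd i f x / f x ^ 2 * (pd i (fun y => pd j f y) x * pd j f x)
        + u x ^ 2 / f x * (pd i (fun y => pd i (fun z => pd j f z) y) x * pd j f x)
        + u x ^ 2 / f x * (pd i (fun y => pd j f y) x * pd i (fun y => pd j f y) x)))
  · refine Finset.sum_congr rfl fun i _ => ?_
    rw [Finset.mul_sum, Finset.mul_sum, ← Finset.sum_add_distrib]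
    refine Finset.sum_congr rfl fun j _ => ?_
    ring
  · have hT : u x ^ 2 / f x * (∑ j, (∑ i, pd i (fun y => pd i (fun z => pd j f z) y) x)
          * pd j f x)
        = ∑ i, ∑ j, u x ^ 2 / f x * (pd i (fun y => pd i (fun z => pd j f z) y) x
            * pd j f x) := by
      simp only [Finset.sum_mul, Finset.mul_sum]
      exact Finset.sum_comm
    have hu2 : 2 * u x / f x * (∑ i, pd i u x * ∑ j, pd i (fun y => pd j f y) x * pd j f x)
        = ∑ i, ∑ j, 2 * u x * pd i u x / f x * (pd i (fun y => pd j f y) x * pd j f x) := by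
      simp only [Finset.mul_sum]
      exact Finset.sum_congr rfl fun i _ => Finset.sum_congr rfl fun j _ => by ring
    have hf2 : u x ^ 2 / f x ^ 2 * (∑ i, pd i f x * ∑ j, pd i (fun y => pd j f y) x * pd j f x)
        = ∑ i, ∑ j, u x ^ 2 * pd i f x / f x ^ 2 * (pd i (fun y => pd j f y) x * pd j f x) := by
      simp only [Finset.mul_sum]
      exact Finset.sum_congr rfl fun i _ => Finset.sum_congr rfl fun j _ => by ring
    have hW : u x ^ 2 / f x * (∑ i, ∑ j, pd i (fun y => pd j f y) x ^ 2)
        = ∑ i, ∑ j, u x ^ 2 / f x * (pd i (fun y => pd j f y) x * pd i (fun y => pd j f y) x) := by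
      simp only [Finset.mul_sum]
      exact Finset.sum_congr rfl fun i _ => Finset.sum_congr rfl fun j _ => by ring
    rw [hT, hu2, hf2, hW, ← Finset.sum_add_distrib, ← Finset.sum_sub_distrib,
      ← Finset.sum_add_distrib]
    refine Finset.sum_congr rfl fun i _ => ?_
    rw [← Finset.sum_add_distrib, ← Finset.sum_sub_distrib, ← Finset.sum_add_distrib]
    refine Finset.sum_congr rfl fun j _ => ?_
    ring
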